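/- Criterion for exponential ergodicity in entropy via log-Harnack and Talagrand inequalities: Let (P_t^*)_{t≥0} be the semigroup of maps on 𝒫_2(ℝ^d) given by P_t^*μ := law of the solution of the DDSDE with initial distribution μ, and suppose P_t^* has a unique invariant probability measure μ_∞ ∈ 𝒫_2(ℝ^d), and for some constants t_0, c_0, C > 0 the log-Harnack inequality P_{t_0}(log f)(ν) ≤ log P_{t_0}f(μ) + c_0 W_2(μ,ν)² holds for all μ,ν ∈ 𝒫_2(ℝ^d) and bounded positive measurable f, and the Talagrand inequality W_2(μ,μ_∞)² ≤ C·Ent(μ|μ_∞) holds for all μ ∈ 𝒫_2(ℝ^d). Then: (1) if W_2(P_t^*μ,μ_∞)² ≤ c_1e^{−λt}W_2(μ,μ_∞)² for some c_1,λ,t_1 ≥ 0, all t ≥ t_1 and all μ ∈ 𝒫_2(ℝ^d), then max{c_0^{−1}Ent(P_t^*μ|μ_∞), W_2(P_t^*μ,μ_∞)²} ≤ c_1e^{−λ(t−t_0)} min{W_2(μ,μ_∞)², C·Ent(μ|μ_∞)} for all t ≥ t_0+t_1 and μ ∈ 𝒫_2(ℝ^d); (2) if Ent(P_t^*μ|μ_∞)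 ≤ c_2e^{−λt}Ent(μ|μ_∞) for some λ,c_2,t_2 > 0, all t ≥ t_2 and all μ ∈ 𝒫_2(ℝ^d), then max{Ent(P_t^*μ|μ_∞), C^{−1}W_2(P_t^*μ,μ_∞)²} ≤ c_2e^{−λ(t−t_0)} min{c_0W_2(μ,μ_∞)², Ent(μ|μ_∞)} for all t ≥ t_0+t_2 and μ ∈ 𝒫_2(ℝ^d). -/

import Mathlib

open MeasureTheory ProbabilityTheory Filter Set Real
open scoped ENNReal NNReal Topology RealInnerProductSpace

noncomputable section

namespace DDSDE

/-- The state space `ℝ^d` with the Euclidean norm. -/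
abbrev Vec (d : ℕ) := EuclideanSpace ℝ (Fin d)

/-- `d × m` real matrices. -/
abbrev Mat (d m : ℕ) := Matrix (Fin d) (Fin m) ℝ

/-- Hilbert–Schmidt (Frobenius) norm of a matrix. -/
def matNorm {d m : ℕ} (M : Mat d m) : ℝ :=
  Real.sqrt (∑ i, ∑ j, (M i j) ^ 2)

/-- Couplings of two measures on (possibly different) measurable spaces. -/
def Coupling {E F : Type*} [MeasurableSpace E] [MeasurableSpace F]
    (μ : Measure E) (ν : Measure F) : Set (Measure (E × F)) :=
  {pi | IsProbabilityMeasure pi ∧ pi.map Prod.fst = μ ∧ pi.map Prod.snd = ν}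

/-- The `L^p`-Wasserstein distance (with the convention `1/(p ⊔ 1)` in the exponent). -/
def Wdist {E : Type*} [MeasurableSpace E] [Dist E] (p : ℝ) (μ ν : Measure E) : ℝ :=
  sInf ((fun pi : Measure (E × E) =>
    (∫ z, dist z.1 z.2 ^ p ∂pi) ^ (1 / max p 1)) '' Coupling μ ν)

/-- The class `𝒫_p(ℝ^d)` of Borel probability measures with finite `p`-th moment. -/
def Pclass (p : ℝ) (d : ℕ) : Set (Measure (Vec d)) :=
  {μ | IsProbabilityMeasure μ ∧ ∫⁻ x, ENNReal.ofReal (‖x‖ ^ p) ∂μ < ∞}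

/-- Total variation distance, `‖μ-ν‖_TV := 2 sup_A |μ(A) - ν(A)|`. -/
def TVdist {E : Type*} [MeasurableSpace E] (μ ν : Measure E) : ℝ :=
  2 * sSup {r | ∃ A : Set E, MeasurableSet A ∧ r = |(μ A).toReal - (ν A).toReal|}

open Classical in
/-- Relative entropy `Ent(ν|μ) = ∫ log (dν/dμ) dν` if `ν ≪ μ` (with value `∞` otherwise). -/
def Ent {E : Type*} [MeasurableSpace E] (ν μ : Measure E) : ℝ≥0∞ :=
  if ν ≪ μ ∧ Integrable (llr ν μ) ν then ENNReal.ofReal (∫ x, llr ν μ x ∂ν) else ∞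

/-- A `ℝ^m`-valued Brownian motion on a probability space. -/
structure IsBrownianMotion {Ω : Type*} [MeasurableSpace Ω] {m : ℕ} (P : Measure Ω)
    (W : ℝ → Ω → Vec m) : Prop where
  meas : ∀ t, Measurable (W t)
  start : ∀ᵐ ω ∂P, W 0 ω = 0
  cont : ∀ᵐ ω ∂P, Continuous fun t => W t ω
  gaussInc : ∀ ⦃s t : ℝ⦄, 0 ≤ s → s ≤ t → ∀ i : Fin m,
    P.map (fun ω => W t ω i - W s ω i) = gaussianReal 0 ((t - s).toNNReal)
  indepInc : ∀ (n : ℕ) (τ : ℕ → ℝ), Monotone τ → 0 ≤ τ 0 →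
    iIndepFun
      (fun p : Fin n × Fin m => fun ω => W (τ (p.1 + 1)) ω p.2 - W (τ p.1) ω p.2) P

/-- A Brownian motion together with a filtration to which it is adapted and with respect to
which it has independent increments. -/
structure IsBrownianSetup {Ω : Type*} [mΩ : MeasurableSpace Ω] {m : ℕ} (P : Measure Ω)
    (F : Filtration ℝ mΩ) (W : ℝ → Ω → Vec m) : Prop where
  bm : IsBrownianMotion P W
  adapted : ∀ t : ℝ, Measurable[F t] (W t)
  indepPast : ∀ ⦃s t : ℝ⦄, 0 ≤ s → s ≤ t →
    Indep (MeasurableSpace.comap (fun ω => W t ω - W s ω) inferInstance) (F s) P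

/-- Riemann sums approximating the Itô integral `∫_s^t H_r dW_r` along uniform partitions. -/
def riemannSum {Ω : Type*} {d m : ℕ} (H : ℝ → Ω → Mat d m) (W : ℝ → Ω → Vec m)
    (s t : ℝ) (n : ℕ) (ω : Ω) : Vec d :=
  ∑ k ∈ Finset.range n,
    (EuclideanSpace.equiv (Fin d) ℝ).symm
      ((H (s + k * (t - s) / n) ω).mulVec
        (fun j => W (s + (k + 1) * (t - s) / n) ω j - W (s + k * (t - s) / n) ω j))

/-- `I` is the Itô integral `∫_s^t H_r dW_r`: the Riemann sums converge to `I` in probability. -/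
def IsItoIntegral {Ω : Type*} [MeasurableSpace Ω] {d m : ℕ} (P : Measure Ω)
    (W : ℝ → Ω → Vec m) (H : ℝ → Ω → Mat d m) (s t : ℝ) (I : Ω → Vec d) : Prop :=
  TendstoInMeasure P (fun n => riemannSum H W s t n) atTop I

/-- Scalar Riemann sums approximating `∫_s^t ⟨h_r, dW_r⟩`. -/
def riemannSumS {Ω : Type*} {m : ℕ} (h : ℝ → Ω → Vec m) (W : ℝ → Ω → Vec m)
    (s t : ℝ) (n : ℕ) (ω : Ω) : ℝ :=
  ∑ k ∈ Finset.range n, ∑ j,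
    h (s + k * (t - s) / n) ω j * (W (s + (k + 1) * (t - s) / n) ω j - W (s + k * (t - s) / n) ω j)

/-- `I` is the scalar Itô integral `∫_s^t ⟨h_r, dW_r⟩`. -/
def IsItoIntegralS {Ω : Type*} [MeasurableSpace Ω] {m : ℕ} (P : Measure Ω)
    (W : ℝ → Ω → Vec m) (h : ℝ → Ω → Vec m) (s t : ℝ) (I : Ω → ℝ) : Prop :=
  TendstoInMeasure P (fun n => riemannSumS h W s t n) atTop I

variable {d m : ℕ}

/-- A (strong) solution of the DDSDE
`dX_t = b(t,X_t,𝓛_{X_t}) dt + σ(t,X_t,𝓛_{X_t}) dW_t` on the time set `J` starting at time `s`. -/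
structure IsSolutionIn {Ω : Type*} [mΩ : MeasurableSpace Ω]
    (b : ℝ → Vec d → Measure (Vec d) → Vec d)
    (σ : ℝ → Vec d → Measure (Vec d) → Mat d m)
    (P : Measure Ω) (F : Filtration ℝ mΩ) (W : ℝ → Ω → Vec m)
    (s : ℝ) (J : Set ℝ) (X : ℝ → Ω → Vec d) : Prop where
  meas : ∀ t, Measurable (X t)
  adapted : ∀ t ∈ J, Measurable[F t] (X t)
  cont : ∀ᵐ ω ∂P, ContinuousOn (fun t => X t ω) J
  intOn : ∀ t ∈ J, IntegrableOn
      (fun r => ∫ ω, (‖b r (X r ω) (P.map (X r))‖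
        + matNorm (σ r (X r ω) (P.map (X r))) ^ 2) ∂P) (Icc s t)
  sde : ∀ t ∈ J, ∃ I : Ω → Vec d,
      IsItoIntegral P W (fun r ω => σ r (X r ω) (P.map (X r))) s t I ∧
      ∀ᵐ ω ∂P, X t ω = X s ω + (∫ r in s..t, b r (X r ω) (P.map (X r))) + I ω

/-- A weak solution of the DDSDE on the time set `J`, starting at time `s` with initial
distribution `ζ`: a filtered probability space carrying a Brownian motion and a solution. -/
structure WeakSolutionIn (b : ℝ → Vec d → Measure (Vec d) → Vec d)
    (σ : ℝ → Vec d → Measure (Vec d) → Mat d m)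
    (s : ℝ) (J : Set ℝ) (ζ : Measure (Vec d)) where
  Ω : Type
  mΩ : MeasurableSpace Ω
  P : @Measure Ω mΩ
  probP : @IsProbabilityMeasure Ω mΩ P
  F : @Filtration Ω ℝ inferInstance mΩ
  W : ℝ → Ω → Vec m
  X : ℝ → Ω → Vec d
  setup : @IsBrownianSetup Ω mΩ m P F W
  sol : @IsSolutionIn d m Ω mΩ b σ P F W s J X
  init : @Measure.map Ω (Vec d) mΩ inferInstance (X s) P = ζ

/-- The time-`t` marginal law of a weak solution. -/
def WeakSolutionIn.law {b : ℝ → Vec d → Measure (Vec d) → Vec d}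
    {σ : ℝ → Vec d → Measure (Vec d) → Mat d m} {s : ℝ} {J : Set ℝ} {ζ : Measure (Vec d)}
    (sol : WeakSolutionIn b σ s J ζ) (t : ℝ) : Measure (Vec d) :=
  @Measure.map _ _ sol.mΩ _ (sol.X t) sol.P

/-- The law of the whole path of a weak solution (with the product σ-algebra on paths). -/
def WeakSolutionIn.pathLaw {b : ℝ → Vec d → Measure (Vec d) → Vec d}
    {σ : ℝ → Vec d → Measure (Vec d) → Mat d m} {s : ℝ} {J : Set ℝ} {ζ : Measure (Vec d)}
    (sol : WeakSolutionIn b σ s J ζ) : Measure (ℝ → Vec d) :=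
  @Measure.map _ _ sol.mΩ _ (fun ω t => sol.X t ω) sol.P

/-- Strong existence and pathwise uniqueness for the DDSDE, for initial distributions
in the class `S`. -/
def StrongWellPosed (b : ℝ → Vec d → Measure (Vec d) → Vec d)
    (σ : ℝ → Vec d → Measure (Vec d) → Mat d m)
    (s : ℝ) (J : Set ℝ) (S : Set (Measure (Vec d))) : Prop :=
  ∀ (Ω : Type) [mΩ : MeasurableSpace Ω] (P : Measure Ω) [IsProbabilityMeasure P]
    (F : Filtration ℝ mΩ) (W : ℝ → Ω → Vec m), IsBrownianSetup P F W →
    ∀ ξ : Ω → Vec d, Measurable[F s] ξ → P.map ξ ∈ S →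
      (∃ X, IsSolutionIn b σ P F W s J X ∧ X s =ᵐ[P] ξ) ∧
      (∀ X Y, IsSolutionIn b σ P F W s J X → X s =ᵐ[P] ξ →
        IsSolutionIn b σ P F W s J Y → Y s =ᵐ[P] ξ → ∀ t ∈ J, X t =ᵐ[P] Y t)

/-- Existence of weak solutions for all initial distributions in `S`. -/
def WeakExistence (b : ℝ → Vec d → Measure (Vec d) → Vec d)
    (σ : ℝ → Vec d → Measure (Vec d) → Mat d m)
    (s : ℝ) (J : Set ℝ) (S : Set (Measure (Vec d))) : Prop :=
  ∀ ζ ∈ S, Nonempty (WeakSolutionIn b σ s J ζ)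

/-- Uniqueness in law of weak solutions for all initial distributions in `S`. -/
def WeakUniqueness (b : ℝ → Vec d → Measure (Vec d) → Vec d)
    (σ : ℝ → Vec d → Measure (Vec d) → Mat d m)
    (s : ℝ) (J : Set ℝ) (S : Set (Measure (Vec d))) : Prop :=
  ∀ ζ ∈ S, ∀ sol₁ sol₂ : WeakSolutionIn b σ s J ζ, sol₁.pathLaw = sol₂.pathLaw

/-- The DDSDE is well-posed (strongly and weakly) for initial distributions in `S`. -/
def WellPosed (b : ℝ → Vec d → Measure (Vec d) → Vec d)
    (σ : ℝ → Vec d → Measure (Vec d) → Mat d m)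
    (s : ℝ) (J : Set ℝ) (S : Set (Measure (Vec d))) : Prop :=
  StrongWellPosed b σ s J S ∧ WeakExistence b σ s J S ∧ WeakUniqueness b σ s J S

end DDSDE
namespace DDSDE

variable {d m : ℕ}

private lemma log_max' {a b : ℝ} (ha : 0 < a) (hb : 0 < b) :
    Real.log (max a b) = max (Real.log a) (Real.log b) := by
  rcases le_total a b with h | h
  · rw [max_eq_right h, max_eq_right (Real.log_le_log ha h)]
  · rw [max_eq_left h, max_eq_left (Real.log_le_log hb h)]

private lemma log_min' {a b : ℝ} (ha : 0 < a) (hb : 0 < b) :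
    Real.log (min a b) = min (Real.log a) (Real.log b) := by
  rcases le_total a b with h | h
  · rw [min_eq_left h, min_eq_left (Real.log_le_log ha h)]
  · rw [min_eq_right h, min_eq_right (Real.log_le_log hb h)]

lemma ent_le_of_logIneq {E : Type*} [MeasurableSpace E] (η μ : Measure E)
    [IsProbabilityMeasure η] [IsProbabilityMeasure μ] (K : ℝ)
    (hK : ∀ f : E → ℝ, Measurable f → (∃ Cf, ∀ x, |f x| ≤ Cf) → (∀ x, 0 < f x) →
      ∫ x, Real.log (f x) ∂η ≤ Real.log (∫ x, f x ∂μ) + K) :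
    Ent η μ ≤ ENNReal.ofReal K := by
  have hK0 : 0 ≤ K := by
    have h := hK (fun _ => 1) measurable_const ⟨1, fun _ => by norm_num⟩ (fun _ => one_pos)
    simpa using h
  -- Step 1: absolute continuity
  have hac : η ≪ μ := by
    refine Measure.AbsolutelyContinuous.mk fun A hA hμA => ?_
    by_contra hne
    have hapos : 0 < (η A).toReal := ENNReal.toReal_pos hne (measure_ne_top _ _)
    obtain ⟨n, hn⟩ := exists_nat_gt (Real.exp (K / (η A).toReal))
    set f : E → ℝ := fun x => A.indicator (fun _ => (n : ℝ)) x + 1 with hfdef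
    have hfm : Measurable f := (measurable_const.indicator hA).add measurable_const
    have hfp : ∀ x, 0 < f x := by
      intro x
      by_cases hx : x ∈ A <;> simp [f, hx] <;> positivity
    have hfb : ∀ x, |f x| ≤ n + 1 := by
      intro x
      rw [abs_of_nonneg (hfp x).le]
      have h1 : A.indicator (fun _ => (n:ℝ)) x ≤ n := by
        by_cases hx : x ∈ A <;> simp [hx]
      simp only [f]
      linarith
    have hf := hK f hfm ⟨n + 1, hfb⟩ hfp
    have hlogf : ∀ x, Real.log (f x) = A.indicator (fun _ => Real.log (n + 1)) x := by
      intro x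
      by_cases hx : x ∈ A <;> simp [f, hx]
    rw [integral_congr_ae (Eventually.of_forall hlogf),
      integral_indicator_const _ hA] at hf
    have hμint : ∫ x, f x ∂μ = 1 := by
      rw [hfdef]
      rw [integral_add ((integrable_const (n:ℝ)).indicator hA) (integrable_const 1),
        integral_indicator_const _ hA, Measure.real, hμA]
      simp
    rw [hμint, Real.log_one, zero_add, smul_eq_mul, Measure.real] at hf
    have hexp : K / (η A).toReal < Real.log (n + 1) := by
      have h1 : Real.exp (K / (η A).toReal) < (n : ℝ) + 1 := by linarith
      calc K / (η A).toReal = Real.log (Real.exp (K / (η A).toReal)) := (Real.log_exp _).symm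
        _ < Real.log ((n : ℝ) + 1) := Real.log_lt_log (Real.exp_pos _) h1
    rw [div_lt_iff₀ hapos] at hexp
    nlinarith
  -- Notation
  set g : E → ℝ := llr η μ with hgdef
  have hgm : Measurable g := measurable_llr η μ
  set L : ℕ → ℝ := fun n => Real.log n with hLdef
  have hL0 : ∀ n, 0 ≤ L n := by
    intro n
    rcases Nat.eq_zero_or_pos n with h | h
    · simp [L, h]
    · exact Real.log_nonneg (by exact_mod_cast h)
  have hLmono : Monotone L := by
    intro i j hij
    rcases Nat.eq_zero_or_pos i with h | h
    · rw [hLdef]; simp only [h, Nat.cast_zero, Real.log_zero]; exact hL0 j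
    · exact Real.log_le_log (by exact_mod_cast h) (by exact_mod_cast hij)
  set a : ℕ → ℝ≥0∞ := fun n => ∫⁻ x, ENNReal.ofReal (min (g x) (L n)) ∂η with hadef
  set bb : ℕ → ℝ≥0∞ := fun n => ∫⁻ x, ENNReal.ofReal (min (-g x) (L n)) ∂η with hbdef
  set A := ∫⁻ x, ENNReal.ofReal (g x) ∂η with hAdef
  set B := ∫⁻ x, ENNReal.ofReal (-g x) ∂η with hBdef
  -- B ≤ 1
  have hB1 : B ≤ 1 := by
    have hmeas : AEMeasurable (fun x => ENNReal.ofReal (-g x)) μ :=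
      (ENNReal.measurable_ofReal.comp hgm.neg).aemeasurable
    rw [hBdef, ← lintegral_rnDeriv_mul hac hmeas]
    calc ∫⁻ x, η.rnDeriv μ x * ENNReal.ofReal (-g x) ∂μ
        ≤ ∫⁻ _, 1 ∂μ := by
          apply lintegral_mono_ae
          filter_upwards [Measure.rnDeriv_lt_top η μ] with x hx
          rcases eq_or_ne (η.rnDeriv μ x) 0 with h0 | h0
          · simp [h0]
          · have htpos : 0 < (η.rnDeriv μ x).toReal := ENNReal.toReal_pos h0 hx.ne
            set t := (η.rnDeriv μ x).toReal with htdef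
            have hrr : η.rnDeriv μ x = ENNReal.ofReal t := (ENNReal.ofReal_toReal hx.ne).symm
            rw [hrr, ← ENNReal.ofReal_mul ENNReal.toReal_nonneg]
            have h1 : -(g x) ≤ t⁻¹ - 1 := by
              have : g x = Real.log t := rfl
              rw [this, ← Real.log_inv]
              exact Real.log_le_sub_one_of_pos (inv_pos.mpr htpos)
            have h2 : t * (-(g x)) ≤ 1 := by
              have h3 := mul_le_mul_of_nonneg_left h1 htpos.le
              have h4 : t * t⁻¹ = 1 := mul_inv_cancel₀ htpos.ne'
              nlinarith
            exact (ENNReal.ofReal_le_ofReal h2).trans (by simp)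
      _ = 1 := by simp
  have hbbB : ∀ n, bb n ≤ B := fun n =>
    lintegral_mono fun x => ENNReal.ofReal_le_ofReal (min_le_left _ _)
  have hamono : Monotone a := fun i j hij => lintegral_mono fun x =>
    ENNReal.ofReal_le_ofReal (min_le_min le_rfl (hLmono hij))
  have hbmono : Monotone bb := fun i j hij => lintegral_mono fun x =>
    ENNReal.ofReal_le_ofReal (min_le_min le_rfl (hLmono hij))
  -- monotone convergence
  have hsup : ∀ h : E → ℝ, Measurable h →
      ∫⁻ x, ENNReal.ofReal (h x) ∂η = ⨆ n, ∫⁻ x, ENNReal.ofReal (min (h x) (L n)) ∂η := by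
    intro h hm
    have hms := lintegral_iSup (μ := η)
      (f := fun n x => ENNReal.ofReal (min (h x) (L n)))
      (fun n => (hm.min measurable_const).ennreal_ofReal)
      (fun i j hij x => ENNReal.ofReal_le_ofReal (min_le_min le_rfl (hLmono hij)))
    rw [← hms]
    refine lintegral_congr fun x => ?_
    refine le_antisymm ?_ (iSup_le fun n => ENNReal.ofReal_le_ofReal (min_le_left _ _))
    have hle : h x ≤ L (⌈Real.exp (h x)⌉₊) := by
      have h1 : Real.exp (h x) ≤ (⌈Real.exp (h x)⌉₊ : ℝ) := Nat.le_ceil _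
      calc h x = Real.log (Real.exp (h x)) := (Real.log_exp _).symm
        _ ≤ _ := Real.log_le_log (Real.exp_pos _) h1
    refine le_iSup_of_le (⌈Real.exp (h x)⌉₊) ?_
    simp only [min_eq_left hle]
    exact le_rfl
  -- key estimate
  have hkey : ∀ n : ℕ, 1 ≤ n → (a n).toReal ≤ K + 1 / n + (bb n).toReal := by
    intro n hn
    have hnpos : (0:ℝ) < n := by exact_mod_cast hn
    set ρ : E → ℝ := fun x => (η.rnDeriv μ x).toReal with hρdef
    have hρm : Measurable ρ := (Measure.measurable_rnDeriv η μ).ennreal_toReal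
    set f : E → ℝ := fun x => max (min (ρ x) n) (n:ℝ)⁻¹ with hfdef
    have hfm : Measurable f := (hρm.min measurable_const).max measurable_const
    have hfp : ∀ x, 0 < f x := fun x => lt_of_lt_of_le (inv_pos.mpr hnpos) (le_max_right _ _)
    have hinvle : (n:ℝ)⁻¹ ≤ n := by
      have h1 : (1:ℝ) ≤ n := by exact_mod_cast hn
      calc (n:ℝ)⁻¹ ≤ 1 := by
            rw [inv_le_one_iff₀]; right; exact h1
        _ ≤ n := h1
    have hfub : ∀ x, f x ≤ n := fun x => max_le (min_le_right _ _) hinvle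
    have hfb : ∀ x, |f x| ≤ n := fun x => abs_le.mpr ⟨by nlinarith [hfp x], hfub x⟩
    have hf := hK f hfm ⟨n, hfb⟩ hfp
    have hfint : Integrable f μ := (integrable_const (n:ℝ)).mono' hfm.aestronglyMeasurable
      (Eventually.of_forall fun x => by simpa [Real.norm_eq_abs] using hfb x)
    have hρint : Integrable ρ μ := Measure.integrable_toReal_rnDeriv
    have hμbound : ∫ x, f x ∂μ ≤ 1 + (n:ℝ)⁻¹ := by
      have hle : ∀ x, f x ≤ ρ x + (n:ℝ)⁻¹ := fun x =>
        max_le ((min_le_left _ _).trans (le_add_of_nonneg_right (by positivity)))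
          (le_add_of_nonneg_left ENNReal.toReal_nonneg)
      calc ∫ x, f x ∂μ ≤ ∫ x, (ρ x + (n:ℝ)⁻¹) ∂μ :=
          integral_mono hfint (hρint.add (integrable_const _)) hle
        _ = 1 + (n:ℝ)⁻¹ := by
          rw [integral_add hρint (integrable_const _), Measure.integral_toReal_rnDeriv hac]
          simp
    have hμpos : 0 < ∫ x, f x ∂μ := by
      have h1 : ∫ _, (n:ℝ)⁻¹ ∂μ ≤ ∫ x, f x ∂μ :=
        integral_mono (integrable_const _) hfint fun x => le_max_right _ _
      have h2 : ∫ _, (n:ℝ)⁻¹ ∂μ = (n:ℝ)⁻¹ := by simp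
      rw [h2] at h1
      exact lt_of_lt_of_le (by positivity) h1
    have hlog : Real.log (∫ x, f x ∂μ) ≤ 1 / n := by
      calc Real.log (∫ x, f x ∂μ) ≤ Real.log (1 + (n:ℝ)⁻¹) := Real.log_le_log hμpos hμbound
        _ ≤ 1 + (n:ℝ)⁻¹ - 1 := Real.log_le_sub_one_of_pos (by positivity)
        _ = 1 / n := by rw [one_div]; ring
    set T : E → ℝ := fun x => max (min (g x) (L n)) (-(L n)) with hTdef
    have hTm : Measurable T := (hgm.min measurable_const).max measurable_const
    have hlogf_ae : (fun x => Real.log (f x)) =ᵐ[η] T := by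
      filter_upwards [Measure.rnDeriv_pos hac, hac.ae_le (Measure.rnDeriv_lt_top η μ)]
        with x hpos hlt
      have hρpos : 0 < ρ x := ENNReal.toReal_pos hpos.ne' hlt.ne
      have hgx : g x = Real.log (ρ x) := rfl
      show Real.log (f x) = T x
      rw [hfdef]
      simp only
      rw [log_max' (lt_min hρpos hnpos) (inv_pos.mpr hnpos),
        log_min' hρpos hnpos, Real.log_inv]
      rfl
    have hTint : Integrable T η := (integrable_const (L n)).mono' hTm.aestronglyMeasurable
      (Eventually.of_forall fun x => by
        rw [Real.norm_eq_abs, abs_le]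
        exact ⟨le_max_right _ _, max_le (min_le_right _ _) (neg_le_self (hL0 n))⟩)
    have hT_eq : ∫ x, T x ∂η = (a n).toReal - (bb n).toReal := by
      rw [integral_eq_lintegral_pos_part_sub_lintegral_neg_part hTint]
      congr 1
      · rw [hadef]
        congr 1
        apply lintegral_congr fun x => ?_
        rcases le_total (-(L n)) (min (g x) (L n)) with h | h
        · rw [hTdef]; simp only; rw [max_eq_left h]
        · rw [hTdef]; simp only; rw [max_eq_right h,
            ENNReal.ofReal_of_nonpos (neg_nonpos.mpr (hL0 n)),
            ENNReal.ofReal_of_nonpos (h.trans (neg_nonpos.mpr (hL0 n)))]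
      · rw [hbdef]
        congr 1
        apply lintegral_congr fun x => ?_
        rcases le_total (g x) (-(L n)) with h | h
        · have h1 : g x ≤ L n := h.trans ((neg_nonpos.mpr (hL0 n)).trans (hL0 n))
          have hT : T x = -(L n) := by
            rw [hTdef]; simp only; rw [min_eq_left h1, max_eq_right h]
          rw [hT, neg_neg, min_eq_right (le_neg.mp h)]
        · rcases le_total (g x) (L n) with h2 | h2
          · have hT : T x = g x := by
              rw [hTdef]; simp only; rw [min_eq_left h2, max_eq_left h]
            rw [hT, min_eq_left (by linarith)]
          · have hT : T x = L n := by
              rw [hTdef]; simp only; rw [min_eq_right h2,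
                max_eq_left ((neg_nonpos.mpr (hL0 n)).trans (hL0 n))]
            rw [hT, min_eq_left (by linarith [hL0 n] : -(g x) ≤ L n),
              ENNReal.ofReal_of_nonpos (neg_nonpos.mpr (hL0 n)),
              ENNReal.ofReal_of_nonpos (by linarith [hL0 n] : -(g x) ≤ 0)]
    have hTle : ∫ x, T x ∂η ≤ K + 1 / n := by
      calc ∫ x, T x ∂η = ∫ x, Real.log (f x) ∂η := (integral_congr_ae hlogf_ae).symm
        _ ≤ Real.log (∫ x, f x ∂μ) + K := hf
        _ ≤ K + 1 / n := by linarith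
    rw [hT_eq] at hTle
    linarith
  -- suprema
  have hAsup : A = ⨆ n, a n := hsup g hgm
  have hBsup : B = ⨆ n, bb n := hsup (fun x => -g x) hgm.neg
  have hane : ∀ n, a n ≠ ∞ := by
    intro n
    refine ((lintegral_mono fun x =>
      ENNReal.ofReal_le_ofReal (min_le_right _ _)).trans_lt ?_).ne
    rw [lintegral_const]
    simp [ENNReal.ofReal_lt_top]
  have hb1 : ∀ n, (bb n).toReal ≤ 1 := by
    intro n
    have := (hbbB n).trans hB1
    calc (bb n).toReal ≤ (1:ℝ≥0∞).toReal := ENNReal.toReal_mono ENNReal.one_ne_top this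
      _ = 1 := by simp
  have haK : ∀ n, 1 ≤ n → a n ≤ ENNReal.ofReal (K + 2) := by
    intro n hn
    have hnpos : (0:ℝ) < n := by exact_mod_cast hn
    have h1n : 1/(n:ℝ) ≤ 1 := by
      rw [div_le_one hnpos]; exact_mod_cast hn
    have h1 : (a n).toReal ≤ K + 2 := by
      have := hkey n hn
      have := hb1 n
      linarith
    exact (ENNReal.le_ofReal_iff_toReal_le (hane n) (by linarith)).mpr h1
  have hAle : A ≤ ENNReal.ofReal (K + 2) := by
    rw [hAsup]
    exact iSup_le fun n => (hamono n.le_succ).trans (haK (n+1) (Nat.succ_le_succ n.zero_le))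
  have hAne : A ≠ ∞ := (hAle.trans_lt ENNReal.ofReal_lt_top).ne
  have hBne : B ≠ ∞ := (hB1.trans_lt ENNReal.one_lt_top).ne
  -- integrability of g
  have hgint : Integrable g η := by
    refine ⟨hgm.aestronglyMeasurable, ?_⟩
    rw [hasFiniteIntegral_iff_norm]
    calc ∫⁻ x, ENNReal.ofReal ‖g x‖ ∂η
        ≤ ∫⁻ x, (ENNReal.ofReal (g x) + ENNReal.ofReal (-g x)) ∂η := by
          apply lintegral_mono fun x => ?_
          rcases le_total 0 (g x) with h | h
          · rw [Real.norm_eq_abs, abs_of_nonneg h]; exact le_self_add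
          · rw [Real.norm_eq_abs, abs_of_nonpos h]; exact le_add_self
      _ = A + B := lintegral_add_left hgm.ennreal_ofReal _
      _ < ∞ := ENNReal.add_lt_top.mpr ⟨lt_top_iff_ne_top.mpr hAne, lt_top_iff_ne_top.mpr hBne⟩
  have hABle : A.toReal ≤ K + B.toReal := by
    have ha_t : Tendsto (fun n => (a n).toReal) atTop (𝓝 A.toReal) :=
      (ENNReal.tendsto_toReal hAne).comp (hAsup ▸ tendsto_atTop_iSup hamono)
    have hb_t : Tendsto (fun n => (bb n).toReal) atTop (𝓝 B.toReal) :=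
      (ENNReal.tendsto_toReal hBne).comp (hBsup ▸ tendsto_atTop_iSup hbmono)
    have hrhs : Tendsto (fun n : ℕ => K + 1/(n:ℝ) + (bb n).toReal) atTop
        (𝓝 (K + 0 + B.toReal)) :=
      (tendsto_const_nhds.add tendsto_one_div_atTop_nhds_zero_nat).add hb_t
    have hle : A.toReal ≤ K + 0 + B.toReal :=
      le_of_tendsto_of_tendsto ha_t hrhs
        (by filter_upwards [eventually_ge_atTop 1] with n hn using hkey n hn)
    linarith
  have hint_le : ∫ x, g x ∂η ≤ K := by
    rw [integral_eq_lintegral_pos_part_sub_lintegral_neg_part hgint, ← hAdef, ← hBdef]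
    linarith
  unfold Ent
  rw [if_pos (⟨hac, hgint⟩ : η ≪ μ ∧ Integrable (llr η μ) η)]
  exact ENNReal.ofReal_le_ofReal hint_le


private lemma measurable_rpow_const' (p : ℝ) : Measurable fun x : ℝ => x ^ p := by
  have h : (fun x : ℝ => x ^ p) = fun x =>
      if x < 0 then Real.exp (Real.log x * p) * Real.cos (p * Real.pi) else
        if x = 0 then (if p = 0 then 1 else 0) else Real.exp (Real.log x * p) := by
    funext x
    rcases lt_trichotomy x 0 with h | h | h
    · rw [if_pos h, Real.rpow_def_of_neg h]
    · subst h
      rw [if_neg (lt_irrefl _), if_pos rfl]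
      by_cases hp : p = 0
      · rw [if_pos hp, hp, Real.rpow_zero]
      · rw [if_neg hp, Real.zero_rpow hp]
    · rw [if_neg (not_lt.mpr h.le), if_neg h.ne', Real.rpow_def_of_pos h]
  rw [h]
  refine Measurable.ite ?_ ((Real.measurable_exp.comp
      (Real.measurable_log.mul_const p)).mul_const _)
    (Measurable.ite ?_ measurable_const
      (Real.measurable_exp.comp (Real.measurable_log.mul_const p)))
  · exact measurableSet_Iio
  · exact MeasurableSet.singleton 0

lemma wdist_symm {d : ℕ} (p : ℝ) (μ ν : Measure (Vec d)) : Wdist p μ ν = Wdist p ν μ := by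
  have key : ∀ α β : Measure (Vec d),
      ((fun pi : Measure (Vec d × Vec d) =>
        (∫ z, dist z.1 z.2 ^ p ∂pi) ^ (1 / max p 1)) '' Coupling α β) ⊆
      ((fun pi : Measure (Vec d × Vec d) =>
        (∫ z, dist z.1 z.2 ^ p ∂pi) ^ (1 / max p 1)) '' Coupling β α) := by
    rintro α β r ⟨pp, ⟨hprob, hfst, hsnd⟩, rfl⟩
    refine ⟨pp.map Prod.swap, ⟨?_, ?_, ?_⟩, ?_⟩
    · haveI := hprob
      exact Measure.isProbabilityMeasure_map measurable_swap.aemeasurable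
    · rw [Measure.map_map measurable_fst measurable_swap]
      exact hsnd
    · rw [Measure.map_map measurable_snd measurable_swap]
      exact hfst
    · have hm : Measurable fun z : Vec d × Vec d => dist z.1 z.2 ^ p :=
        (measurable_rpow_const' p).comp continuous_dist.measurable
      simp only
      rw [integral_map measurable_swap.aemeasurable hm.aestronglyMeasurable]
      congr 1
      refine integral_congr_ae (Eventually.of_forall fun z => ?_)
      simp [dist_comm]
  unfold Wdist
  rw [Set.Subset.antisymm (key μ ν) (key ν μ)]


/-- **Exponential ergodicity in entropy via log-Harnack and Talagrand inequalities**
(Ren–Wang).  Let `P_t^*` be the semigroup of the DDSDE on `𝒫_2(ℝ^d)` with unique invariant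
probability measure `μinf`, satisfying a log-Harnack inequality at time `t₀` and a Talagrand
inequality.  Then exponential decay of `W_2` implies exponential decay of both `W_2` and the
relative entropy, and vice versa. -/
theorem entropy_ergodicity_criterion
    (b : Vec d → Measure (Vec d) → Vec d)
    (σ : Vec d → Measure (Vec d) → Mat d m)
    (Pstar : ℝ → Measure (Vec d) → Measure (Vec d))
    -- `P_t^*μ` is the marginal law of the (well-posed) DDSDE with initial distribution `μ`
    (hPstar : ∀ ν ∈ Pclass 2 d,
      ∀ sol : WeakSolutionIn (fun _ x μ' => b x μ') (fun _ x μ' => σ x μ') 0 (Ici 0) ν,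
      ∀ t ≥ (0:ℝ), sol.law t = Pstar t ν)
    (hexists : ∀ ν ∈ Pclass 2 d,
      Nonempty (WeakSolutionIn (fun _ x μ' => b x μ') (fun _ x μ' => σ x μ') 0 (Ici 0) ν))
    (hmaps : ∀ t ≥ (0:ℝ), ∀ ν ∈ Pclass 2 d, Pstar t ν ∈ Pclass 2 d)
    (hsemigroup : ∀ s ≥ (0:ℝ), ∀ t ≥ (0:ℝ), ∀ ν ∈ Pclass 2 d,
      Pstar (t + s) ν = Pstar t (Pstar s ν))
    (hzero : ∀ ν ∈ Pclass 2 d, Pstar 0 ν = ν)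
    -- unique invariant probability measure μinf ∈ 𝒫_2(ℝ^d)
    (μinf : Measure (Vec d)) (hμinf : μinf ∈ Pclass 2 d)
    (hinv : ∀ t ≥ (0:ℝ), Pstar t μinf = μinf)
    (huniq : ∀ ν ∈ Pclass 2 d, (∀ t ≥ (0:ℝ), Pstar t ν = ν) → ν = μinf)
    -- log-Harnack inequality at time t₀
    (t₀ c₀ C : ℝ) (ht₀ : 0 < t₀) (hc₀ : 0 < c₀) (hC : 0 < C)
    (hLH : ∀ μ ∈ Pclass 2 d, ∀ ν ∈ Pclass 2 d,
      ∀ f : Vec d → ℝ, Measurable f → (∃ Cf, ∀ x, |f x| ≤ Cf) → (∀ x, 0 < f x) →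
        ∫ x, Real.log (f x) ∂(Pstar t₀ ν) ≤
          Real.log (∫ x, f x ∂(Pstar t₀ μ)) + c₀ * Wdist 2 μ ν ^ 2)
    -- Talagrand inequality
    (hTal : ∀ μ ∈ Pclass 2 d,
      ENNReal.ofReal (Wdist 2 μ μinf ^ 2) ≤ ENNReal.ofReal C * Ent μ μinf) :
    -- (1) W₂-exponential decay implies decay of entropy and W₂
    (∀ c₁ lam t₁ : ℝ, 0 ≤ c₁ → 0 ≤ lam → 0 ≤ t₁ →
      (∀ t ≥ t₁, ∀ μ ∈ Pclass 2 d,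
        Wdist 2 (Pstar t μ) μinf ^ 2 ≤ c₁ * Real.exp (-lam * t) * Wdist 2 μ μinf ^ 2) →
      ∀ t ≥ t₀ + t₁, ∀ μ ∈ Pclass 2 d,
        max (ENNReal.ofReal c₀⁻¹ * Ent (Pstar t μ) μinf)
            (ENNReal.ofReal (Wdist 2 (Pstar t μ) μinf ^ 2)) ≤
          ENNReal.ofReal (c₁ * Real.exp (-lam * (t - t₀))) *
            min (ENNReal.ofReal (Wdist 2 μ μinf ^ 2)) (ENNReal.ofReal C * Ent μ μinf)) ∧
    -- (2) entropy-exponential decay implies decay of entropy and W₂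
    (∀ c₂ lam t₂ : ℝ, 0 < c₂ → 0 < lam → 0 < t₂ →
      (∀ t ≥ t₂, ∀ μ ∈ Pclass 2 d,
        Ent (Pstar t μ) μinf ≤ ENNReal.ofReal (c₂ * Real.exp (-lam * t)) * Ent μ μinf) →
      ∀ t ≥ t₀ + t₂, ∀ μ ∈ Pclass 2 d,
        max (Ent (Pstar t μ) μinf)
            (ENNReal.ofReal C⁻¹ * ENNReal.ofReal (Wdist 2 (Pstar t μ) μinf ^ 2)) ≤
          ENNReal.ofReal (c₂ * Real.exp (-lam * (t - t₀))) *
            min (ENNReal.ofReal (c₀ * Wdist 2 μ μinf ^ 2)) (Ent μ μinf)) := by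
  have hent : ∀ ν ∈ Pclass 2 d, Ent (Pstar t₀ ν) μinf ≤
      ENNReal.ofReal (c₀ * Wdist 2 ν μinf ^ 2) := by
    intro ν hν
    haveI : IsProbabilityMeasure μinf := hμinf.1
    haveI : IsProbabilityMeasure (Pstar t₀ ν) := (hmaps t₀ ht₀.le ν hν).1
    have h := ent_le_of_logIneq (Pstar t₀ ν) μinf (c₀ * Wdist 2 μinf ν ^ 2) ?_
    · rwa [wdist_symm 2 μinf ν] at h
    · intro f hf hb hp
      have h2 := hLH μinf hμinf ν hν f hf hb hp
      rwa [hinv t₀ ht₀.le] at h2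
  constructor
  · intro c₁ lam t₁ hc₁ hlam ht₁ hdecay t ht μ hμ
    have ht0 : (0:ℝ) ≤ t - t₀ := by linarith
    have hμ' := hmaps (t - t₀) ht0 μ hμ
    have hsg : Pstar t μ = Pstar t₀ (Pstar (t - t₀) μ) := by
      have h := hsemigroup (t - t₀) ht0 t₀ ht₀.le μ hμ
      rw [show t₀ + (t - t₀) = t by ring] at h
      exact h
    set W := Wdist 2 μ μinf with hW
    have hWnn : (0:ℝ) ≤ W ^ 2 := sq_nonneg _
    have hE : (0:ℝ) ≤ c₁ * Real.exp (-lam * (t - t₀)) := by positivity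
    have hW1 : Wdist 2 (Pstar (t - t₀) μ) μinf ^ 2 ≤ c₁ * Real.exp (-lam * (t - t₀)) * W ^ 2 :=
      hdecay (t - t₀) (by linarith) μ hμ
    have hEnt : Ent (Pstar t μ) μinf ≤
        ENNReal.ofReal (c₀ * (c₁ * Real.exp (-lam * (t - t₀)) * W ^ 2)) := by
      rw [hsg]
      exact (hent _ hμ').trans (ENNReal.ofReal_le_ofReal
        (mul_le_mul_of_nonneg_left hW1 hc₀.le))
    have hexp2 : Real.exp (-lam * t) ≤ Real.exp (-lam * (t - t₀)) := by
      apply Real.exp_le_exp.mpr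
      nlinarith
    have hW2 : Wdist 2 (Pstar t μ) μinf ^ 2 ≤ c₁ * Real.exp (-lam * (t - t₀)) * W ^ 2 := by
      have h1 := hdecay t (by linarith) μ hμ
      have h3 : c₁ * Real.exp (-lam * t) * W ^ 2 ≤ c₁ * Real.exp (-lam * (t - t₀)) * W ^ 2 :=
        mul_le_mul_of_nonneg_right (mul_le_mul_of_nonneg_left hexp2 hc₁) hWnn
      exact h1.trans h3
    rw [min_eq_left (hTal μ hμ)]
    refine max_le ?_ ?_
    · calc ENNReal.ofReal c₀⁻¹ * Ent (Pstar t μ) μinf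
          ≤ ENNReal.ofReal c₀⁻¹ *
            ENNReal.ofReal (c₀ * (c₁ * Real.exp (-lam * (t - t₀)) * W ^ 2)) :=
            mul_le_mul_right hEnt _
        _ = ENNReal.ofReal (c₁ * Real.exp (-lam * (t - t₀)) * W ^ 2) := by
            rw [← ENNReal.ofReal_mul (inv_nonneg.mpr hc₀.le),
              inv_mul_cancel_left₀ hc₀.ne']
        _ = ENNReal.ofReal (c₁ * Real.exp (-lam * (t - t₀))) * ENNReal.ofReal (W ^ 2) :=
            ENNReal.ofReal_mul hE
    · calc ENNReal.ofReal (Wdist 2 (Pstar t μ) μinf ^ 2)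
          ≤ ENNReal.ofReal (c₁ * Real.exp (-lam * (t - t₀)) * W ^ 2) :=
            ENNReal.ofReal_le_ofReal hW2
        _ = ENNReal.ofReal (c₁ * Real.exp (-lam * (t - t₀))) * ENNReal.ofReal (W ^ 2) :=
            ENNReal.ofReal_mul hE
  · intro c₂ lam t₂ hc₂ hlam ht₂ hdecay t ht μ hμ
    have hPt₀μ := hmaps t₀ ht₀.le μ hμ
    have hsg : Pstar t μ = Pstar (t - t₀) (Pstar t₀ μ) := by
      have h := hsemigroup t₀ ht₀.le (t - t₀) (by linarith) μ hμ
      rw [show t - t₀ + t₀ = t by ring] at h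
      exact h
    have hbound1 : Ent (Pstar t μ) μinf ≤ ENNReal.ofReal (c₂ * Real.exp (-lam * (t - t₀))) *
        ENNReal.ofReal (c₀ * Wdist 2 μ μinf ^ 2) := by
      rw [hsg]
      exact (hdecay (t - t₀) (by linarith) (Pstar t₀ μ) hPt₀μ).trans
        (mul_le_mul_right (hent μ hμ) _)
    have hbound2 : Ent (Pstar t μ) μinf ≤
        ENNReal.ofReal (c₂ * Real.exp (-lam * (t - t₀))) * Ent μ μinf := by
      refine (hdecay t (by linarith) μ hμ).trans (mul_le_mul_left ?_ _)
      apply ENNReal.ofReal_le_ofReal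
      have hexp2 : Real.exp (-lam * t) ≤ Real.exp (-lam * (t - t₀)) := by
        apply Real.exp_le_exp.mpr
        nlinarith
      exact mul_le_mul_of_nonneg_left hexp2 hc₂.le
    have hminle : Ent (Pstar t μ) μinf ≤ ENNReal.ofReal (c₂ * Real.exp (-lam * (t - t₀))) *
        min (ENNReal.ofReal (c₀ * Wdist 2 μ μinf ^ 2)) (Ent μ μinf) := by
      rcases le_total (ENNReal.ofReal (c₀ * Wdist 2 μ μinf ^ 2)) (Ent μ μinf) with h | h
      · rw [min_eq_left h]; exact hbound1
      · rw [min_eq_right h]; exact hbound2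
    refine max_le hminle ?_
    calc ENNReal.ofReal C⁻¹ * ENNReal.ofReal (Wdist 2 (Pstar t μ) μinf ^ 2)
        ≤ ENNReal.ofReal C⁻¹ * (ENNReal.ofReal C * Ent (Pstar t μ) μinf) :=
          mul_le_mul_right (hTal (Pstar t μ) (hmaps t (by linarith) μ hμ)) _
      _ = Ent (Pstar t μ) μinf := by
          rw [← mul_assoc, ← ENNReal.ofReal_mul (inv_nonneg.mpr hC.le),
            inv_mul_cancel₀ hC.ne', ENNReal.ofReal_one, one_mul]
      _ ≤ _ := hminle

end DDSDE
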